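/- A non-wasteful mechanism for online fair division is strategy-proof and envy-free ex ante if and only if it is ex ante equivalent to the Like mechanism. -/

import Mathlib

/-!
Online fair division with additive utilities (Aleksandrov & Walsh).

Agents are `Fin n`, items `Fin m` arriving in index order. A bid/utility
profile is `Bids n m`. An allocation assigns to each item an optional agent
(`none` = discarded). An online mechanism returns, for every instance, a
probability distribution over allocations, where the distribution over the
first `j` items depends only on the bids for the first `j` items.
-/

open Finset
open scoped Classical

noncomputable section

abbrev Bids (n m : ℕ) := Fin n → Fin m → ℝ
abbrev Alloc (n m : ℕ) := Fin m → Option (Fin n)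

/-- An online mechanism for online fair division. -/
structure OnlineMech where
  /-- probability of returning allocation `π` on bids `v` -/
  d : ∀ (n m : ℕ), Bids n m → Alloc n m → ℝ
  nonneg : ∀ n m v π, 0 ≤ d n m v π
  total : ∀ n m v, ∑ π : Alloc n m, d n m v π = 1
  /-- online: the joint distribution of the allocation of items `o_1,…,o_j`
  depends only on the bids for items `o_1,…,o_j`. -/
  online : ∀ (n m : ℕ) (v w : Bids n m) (j : Fin m),
      (∀ (i : Fin n) (k : Fin m), k ≤ j → v i k = w i k) →
      ∀ σ : Alloc n m,
        ∑ π ∈ univ.filter (fun π : Alloc n m => ∀ k ≤ j, π k = σ k), d n m v π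
      = ∑ π ∈ univ.filter (fun π : Alloc n m => ∀ k ≤ j, π k = σ k), d n m w π

/-- Marginal probability that agent `i` receives item `j` under distribution `d`. -/
def genMarg {n m : ℕ} (d : Alloc n m → ℝ) (j : Fin m) (i : Fin n) : ℝ :=
  ∑ π ∈ univ.filter (fun π : Alloc n m => π j = some i), d π

/-- `p_i(Π_j)`: probability agent `i` gets item `j` under mechanism `M` on bids `v`. -/
def marg (M : OnlineMech) {n m : ℕ} (v : Bids n m) (j : Fin m) (i : Fin n) : ℝ :=
  genMarg (M.d n m v) j i

/-- Non-wasteful: each item is allocated (with probability one in total) only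
among agents bidding positively for it, and is discarded iff no one bids
positively for it. -/
def NonWasteful (M : OnlineMech) : Prop :=
  ∀ (n m : ℕ) (v : Bids n m) (π : Alloc n m), 0 < M.d n m v π →
    ∀ j : Fin m,
      ((∀ i, v i j = 0) → π j = none) ∧
      ((∃ i, 0 < v i j) → π j ≠ none) ∧
      (∀ i, π j = some i → 0 < v i j)

/-- Replace agent `i`'s bid for item `j` by `c`. -/
def setBid {n m : ℕ} (v : Bids n m) (i : Fin n) (j : Fin m) (c : ℝ) : Bids n m :=
  fun a k => if a = i ∧ k = j then c else v a k

/-- Replace agent `i`'s whole bid vector by `b`. -/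
def setAgent {n m : ℕ} (v : Bids n m) (i : Fin n) (b : Fin m → ℝ) : Bids n m :=
  fun a => if a = i then b else v a

/-- Strategy-proof: no agent can strictly increase their expected (true) utility by
reporting any sequence of bids other than their sincere utilities, others sincere. -/
def StrategyProof (M : OnlineMech) : Prop :=
  ∀ (n m : ℕ) (u : Bids n m), (∀ i j, 0 ≤ u i j) →
    ∀ (i : Fin n) (b : Fin m → ℝ), (∀ j, 0 ≤ b j) →
      ∑ j, marg M (setAgent u i b) j i * u i j ≤ ∑ j, marg M u j i * u i j

/-- Step mechanism: an agent's probability for the current item is `0` on a zero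
bid and is invariant under the magnitude of a positive bid (all else fixed). -/
def IsStep (M : OnlineMech) : Prop :=
  ∀ (n m : ℕ) (v : Bids n m) (i : Fin n) (j : Fin m),
    (v i j = 0 → marg M v j i = 0) ∧
    (∀ c : ℝ, 0 < c → 0 < v i j → marg M (setBid v i j c) j i = marg M v j i)

/-- Memoryless mechanism: an agent's probability for item `j` does not depend on
that agent's bids for the earlier items `o_1,…,o_{j-1}` (their bid for `j` and
all other agents' bids being fixed). -/
def Memoryless (M : OnlineMech) : Prop :=
  ∀ (n m : ℕ) (v w : Bids n m) (i : Fin n) (j : Fin m),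
    (∀ a, a ≠ i → v a = w a) → (∀ k : Fin m, j ≤ k → v i k = w i k) →
    marg M v j i = marg M w j i

/-- Online strategy-proof: at each round `j`, no agent can strictly increase their
expected utility over the first `j` items by misreporting only the bid for item
`o_j`, having bid sincerely before (others sincere). -/
def OnlineSP (M : OnlineMech) : Prop :=
  ∀ (n m : ℕ) (u : Bids n m), (∀ i j, 0 ≤ u i j) →
    ∀ (i : Fin n) (j : Fin m) (c : ℝ), 0 ≤ c →
      ∑ h ∈ univ.filter (fun h : Fin m => h ≤ j), marg M (setBid u i j c) h i * u i h
      ≤ ∑ h ∈ univ.filter (fun h : Fin m => h ≤ j), marg M u h i * u i h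

/-- Agents bidding positively for item `j`. -/
def likeSet {n m : ℕ} (v : Bids n m) (j : Fin m) : Finset (Fin n) :=
  univ.filter (fun a : Fin n => 0 < v a j)

/-- Probability of agent `i` for item `j` under the Like mechanism: uniform among
positive bidders. -/
def likeProb {n m : ℕ} (v : Bids n m) (j : Fin m) (i : Fin n) : ℝ :=
  if i ∈ likeSet v j then ((likeSet v j).card : ℝ)⁻¹ else 0

/-- Ex ante equivalence to the Like mechanism: on every instance, every agent
receives every item with the same probability as under Like. -/
def ExAnteLike (M : OnlineMech) : Prop :=
  ∀ (n m : ℕ) (u : Bids n m), (∀ i j, 0 ≤ u i j) →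
    ∀ (i : Fin n) (j : Fin m), marg M u j i = likeProb u j i

/-- Envy-free ex ante (sincere bidding). -/
def EFA (M : OnlineMech) : Prop :=
  ∀ (n m : ℕ) (u : Bids n m), (∀ i j, 0 ≤ u i j) →
    ∀ i k : Fin n, ∑ h, marg M u h k * u i h ≤ ∑ h, marg M u h i * u i h

/-- Shared envy-free ex ante: `i`'s expected utility restricted to the items
`k` also likes is at least `i`'s expected utility for `k`'s expected allocation. -/
def SEFA (M : OnlineMech) : Prop :=
  ∀ (n m : ℕ) (u : Bids n m), (∀ i j, 0 ≤ u i j) →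
    ∀ i k : Fin n,
      ∑ h, marg M u h k * u i h
      ≤ ∑ h ∈ univ.filter (fun h : Fin m => 0 < u k h), marg M u h i * u i h

/-- `u_{ik}(π)`: agent `i`'s utility for agent `k`'s bundle in allocation `π`. -/
def util {n m : ℕ} (u : Bids n m) (i k : Fin n) (π : Alloc n m) : ℝ :=
  ∑ j ∈ univ.filter (fun j : Fin m => π j = some k), u i j

/-- Pareto efficiency (ex post) of an allocation. -/
def ParetoEff {n m : ℕ} (u : Bids n m) (π : Alloc n m) : Prop :=
  ¬ ∃ π' : Alloc n m,
      (∀ i, util u i i π ≤ util u i i π') ∧ ∃ i, util u i i π < util u i i π'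

/-- Pareto efficiency ex post of a mechanism (sincere bidding). -/
def PEP (M : OnlineMech) : Prop :=
  ∀ (n m : ℕ) (u : Bids n m), (∀ i j, 0 ≤ u i j) →
    ∀ π : Alloc n m, 0 < M.d n m u π → ParetoEff u π

/-- Ex ante Pareto efficiency of a vector of item-allocation probabilities `f`:
no feasible random assignment `q` gives every agent at least their expected
utility and some agent strictly more. -/
def margPEA {n m : ℕ} (u : Bids n m) (f : Fin m → Fin n → ℝ) : Prop :=
  ¬ ∃ q : Fin n → Fin m → ℝ,
      (∀ i j, 0 ≤ q i j) ∧ (∀ j, ∑ i, q i j ≤ 1) ∧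
      (∀ i, ∑ h, f h i * u i h ≤ ∑ h, q i h * u i h) ∧
      (∃ i, ∑ h, f h i * u i h < ∑ h, q i h * u i h)

/-- Pareto efficiency ex ante of a mechanism (sincere bidding). -/
def PEA (M : OnlineMech) : Prop :=
  ∀ (n m : ℕ) (u : Bids n m), (∀ i j, 0 ≤ u i j) → margPEA u (marg M u)

/-- Envy-freeness ex ante at every prefix of the item sequence. -/
def PrefixEFA (M : OnlineMech) : Prop :=
  ∀ (n m : ℕ) (u : Bids n m), (∀ i j, 0 ≤ u i j) →
    ∀ (j : Fin m) (i k : Fin n),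
      ∑ h ∈ univ.filter (fun h : Fin m => h ≤ j), marg M u h k * u i h
      ≤ ∑ h ∈ univ.filter (fun h : Fin m => h ≤ j), marg M u h i * u i h

/-- The allocation produced by Online Serial Dictator with priority order `σ`
(lower `σ`-value = higher priority): each item goes to the highest-priority
positive bidder, and is discarded if there is none. -/
def osdAlloc {n m : ℕ} (σ : Equiv.Perm (Fin n)) (v : Bids n m) : Alloc n m := fun j =>
  if h : (likeSet v j).Nonempty then
    some (σ.symm (((likeSet v j).image σ).min' (h.image σ))) else none

/-- `i`'s utility for `k`'s bundle restricted to the first `j` items. -/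
def utilUpTo {n m : ℕ} (u : Bids n m) (i k : Fin n) (π : Alloc n m) (j : ℕ) : ℝ :=
  ∑ h ∈ univ.filter (fun h : Fin m => (h : ℕ) < j ∧ π h = some k), u i h

/-- Pareto efficiency of the allocation of the first `j` items. -/
def PEUpTo {n m : ℕ} (u : Bids n m) (π : Alloc n m) (j : ℕ) : Prop :=
  ¬ ∃ π' : Alloc n m,
      (∀ i, utilUpTo u i i π j ≤ utilUpTo u i i π' j) ∧
      ∃ i, utilUpTo u i i π j < utilUpTo u i i π' j

/-- Number of items among `o_1,…,o_{j-1}` held by agent `a` in `π`. -/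
def countBefore {n m : ℕ} (π : Alloc n m) (a : Fin n) (j : Fin m) : ℕ :=
  (univ.filter (fun k : Fin m => k < j ∧ π k = some a)).card

/-- Feasible agents for item `j` under Balanced Like: positive bidders holding
the fewest earlier items among positive bidders. -/
def blFeasSet {n m : ℕ} (u : Bids n m) (π : Alloc n m) (j : Fin m) : Finset (Fin n) :=
  univ.filter (fun a : Fin n =>
    0 < u a j ∧ ∀ b : Fin n, 0 < u b j → countBefore π a j ≤ countBefore π b j)

/-- Probability that Balanced Like returns allocation `π` (product of the
uniform conditional probabilities round by round). -/
def blDist {n m : ℕ} (u : Bids n m) (π : Alloc n m) : ℝ :=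
  ∏ j : Fin m,
    match π j with
    | none => if ∀ i, ¬ 0 < u i j then 1 else 0
    | some i => if i ∈ blFeasSet u π j then ((blFeasSet u π j).card : ℝ)⁻¹ else 0

/-- Probability that the Like mechanism returns allocation `π`. -/
def likeDist {n m : ℕ} (u : Bids n m) (π : Alloc n m) : ℝ :=
  ∏ j : Fin m,
    match π j with
    | none => if ∀ i, ¬ 0 < u i j then 1 else 0
    | some i => if i ∈ likeSet u j then ((likeSet u j).card : ℝ)⁻¹ else 0

/-- Feasible agents for item `j` under Maximum Like: positive bidders with the
maximum bid. -/
def mlFeasSet {n m : ℕ} (u : Bids n m) (j : Fin m) : Finset (Fin n) :=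
  univ.filter (fun a : Fin n => 0 < u a j ∧ ∀ b : Fin n, u b j ≤ u a j)

/-- Probability that Maximum Like returns allocation `π`. -/
def mlDist {n m : ℕ} (u : Bids n m) (π : Alloc n m) : ℝ :=
  ∏ j : Fin m,
    match π j with
    | none => if ∀ i, ¬ 0 < u i j then 1 else 0
    | some i => if i ∈ mlFeasSet u j then ((mlFeasSet u j).card : ℝ)⁻¹ else 0


/-- A non-wasteful mechanism is strategy-proof and envy-free ex
ante iff it is ex ante equivalent to the Like mechanism. -/
lemma prefixMarg (M : OnlineMech) {n m : ℕ} (v w : Bids n m) (j : Fin m)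
    (hagree : ∀ (i : Fin n) (k : Fin m), k ≤ j → v i k = w i k) (i : Fin n) :
    marg M v j i = marg M w j i := by
  classical
  unfold marg genMarg
  have key : ∀ u : Bids n m,
      ∑ π ∈ univ.filter (fun π : Alloc n m => π j = some i), M.d n m u π
      = ∑ σ : Alloc n m, ∑ π ∈ (univ.filter (fun π : Alloc n m => π j = some i)).filter
          (fun π => (fun k => if k ≤ j then π k else none) = σ), M.d n m u π := by
    intro u
    rw [Finset.sum_fiberwise_of_maps_to (fun x _ => Finset.mem_univ _)]
  rw [key v, key w]
  refine Finset.sum_congr rfl fun σ _ => ?_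
  by_cases hσ : σ j = some i ∧ ∀ k : Fin m, ¬ (k ≤ j) → σ k = none
  · have hset : (univ.filter (fun π : Alloc n m => π j = some i)).filter
          (fun π => (fun k => if k ≤ j then π k else none) = σ)
        = univ.filter (fun π : Alloc n m => ∀ k ≤ j, π k = σ k) := by
      ext π
      simp only [Finset.mem_filter, Finset.mem_univ, true_and]
      constructor
      · rintro ⟨hπj, hfun⟩ k hk
        have h2 := congrFun hfun k
        rw [if_pos hk] at h2
        exact h2
      · intro hall
        refine ⟨by rw [hall j le_rfl]; exact hσ.1, ?_⟩
        funext k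
        by_cases hk : k ≤ j
        · rw [if_pos hk]; exact hall k hk
        · rw [if_neg hk]; exact (hσ.2 k hk).symm
    rw [hset]
    exact M.online n m v w j hagree σ
  · have hset : (univ.filter (fun π : Alloc n m => π j = some i)).filter
          (fun π => (fun k => if k ≤ j then π k else none) = σ) = ∅ := by
      rw [Finset.eq_empty_iff_forall_notMem]
      intro π hπ
      simp only [Finset.mem_filter, Finset.mem_univ, true_and] at hπ
      refine hσ ⟨?_, ?_⟩
      · have h2 := congrFun hπ.2 j
        rw [if_pos le_rfl] at h2
        rw [← h2]; exact hπ.1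
      · intro k hk
        have h2 := congrFun hπ.2 k
        rw [if_neg hk] at h2
        exact h2.symm
    rw [hset, Finset.sum_empty, Finset.sum_empty]

lemma marg_zero (M : OnlineMech) (hnw : NonWasteful M) {n m : ℕ} (v : Bids n m)
    {i : Fin n} {j : Fin m} (h : ¬ 0 < v i j) : marg M v j i = 0 := by
  unfold marg genMarg
  refine Finset.sum_eq_zero fun π hπ => ?_
  simp only [Finset.mem_filter, Finset.mem_univ, true_and] at hπ
  rcases (M.nonneg n m v π).lt_or_eq with hd | hd
  · exact absurd ((hnw n m v π hd j).2.2 i hπ) h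
  · exact hd.symm

lemma marg_sum_one (M : OnlineMech) (hnw : NonWasteful M) {n m : ℕ} (v : Bids n m)
    {j : Fin m} {i0 : Fin n} (h0 : 0 < v i0 j) : ∑ i, marg M v j i = 1 := by
  classical
  unfold marg genMarg
  have hnone : ∑ π ∈ univ.filter (fun π : Alloc n m => π j = none), M.d n m v π = 0 := by
    refine Finset.sum_eq_zero fun π hπ => ?_
    simp only [Finset.mem_filter, Finset.mem_univ, true_and] at hπ
    rcases (M.nonneg n m v π).lt_or_eq with hd | hd
    · exact absurd hπ ((hnw n m v π hd j).2.1 ⟨i0, h0⟩)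
    · exact hd.symm
  have hsplit := Finset.sum_filter_add_sum_filter_not (univ : Finset (Alloc n m))
      (fun π => π j = none) (M.d n m v)
  rw [M.total n m v, hnone, zero_add] at hsplit
  have hfib := Finset.sum_fiberwise_of_maps_to
      (s := univ.filter (fun π : Alloc n m => ¬ π j = none)) (t := (univ : Finset (Fin n)))
      (g := fun π : Alloc n m => (π j).getD i0) (fun x _ => Finset.mem_univ _) (M.d n m v)
  rw [hsplit] at hfib
  rw [← hfib]
  refine Finset.sum_congr rfl fun a _ => Finset.sum_congr ?_ fun _ _ => rfl
  ext π
  simp only [Finset.mem_filter, Finset.mem_univ, true_and]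
  cases hπ : π j <;> simp [hπ]

lemma likeProb_nonneg {n m : ℕ} (v : Bids n m) (j : Fin m) (i : Fin n) :
    0 ≤ likeProb v j i := by
  unfold likeProb
  split
  · positivity
  · exact le_rfl

lemma easy_dir (M : OnlineMech) (hlike : ExAnteLike M) : StrategyProof M ∧ EFA M := by
  constructor
  · intro n m u hu i b hb
    refine Finset.sum_le_sum fun j _ => ?_
    have hb' : ∀ a k, 0 ≤ setAgent u i b a k := by
      intro a k; unfold setAgent; split
      · exact hb k
      · exact hu a k
    rw [hlike n m u hu i j, hlike n m (setAgent u i b) hb' i j]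
    by_cases hij : 0 < u i j
    · by_cases hbj : 0 < b j
      · have hset : likeSet (setAgent u i b) j = likeSet u j := by
          unfold likeSet
          apply Finset.filter_congr
          intro c _
          unfold setAgent
          by_cases hc : c = i
          · subst hc; simp [hbj, hij]
          · simp [hc]
        unfold likeProb
        rw [hset]
      · have hni : i ∉ likeSet (setAgent u i b) j := by
          intro hmem; have h := (Finset.mem_filter.mp hmem).2; unfold setAgent at h; rw [if_pos rfl] at h; exact hbj h
        refine le_trans (le_of_eq ?_) (mul_nonneg (likeProb_nonneg u j i) (hu i j))
        unfold likeProb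
        rw [if_neg hni, zero_mul]
    · have h0 : u i j = 0 := le_antisymm (not_lt.mp hij) (hu i j)
      rw [h0, mul_zero, mul_zero]
  · intro n m u hu i k
    refine Finset.sum_le_sum fun h _ => ?_
    rw [hlike n m u hu i h, hlike n m u hu k h]
    by_cases hih : 0 < u i h
    · refine mul_le_mul_of_nonneg_right ?_ (hu i h)
      have hi : i ∈ likeSet u h := by simp [likeSet, hih]
      unfold likeProb
      rw [if_pos hi]
      split
      · exact le_rfl
      · positivity
    · have h0 : u i h = 0 := le_antisymm (not_lt.mp hih) (hu i h)
      rw [h0, mul_zero, mul_zero]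
lemma hard_dir (M : OnlineMech) (hnw : NonWasteful M) (hsp : StrategyProof M)
    (hefa : EFA M) : ExAnteLike M := by
  intro n m u hu i j
  classical
  set v : Bids n m := fun a k => if k ≤ j then u a k else 0 with hvdef
  have hvnn : ∀ a k, 0 ≤ v a k := by
    intro a k; rw [hvdef]; dsimp only; split
    · exact hu a k
    · exact le_rfl
  have hagree : ∀ (a : Fin n) (k : Fin m), k ≤ j → u a k = v a k := by
    intro a k hk; rw [hvdef]; dsimp only; rw [if_pos hk]
  have hvhigh : ∀ (a : Fin n) (k : Fin m), ¬ k ≤ j → v a k = 0 := by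
    intro a k hk; rw [hvdef]; dsimp only; rw [if_neg hk]
  have hprefix : ∀ h : Fin m, h ≤ j → ∀ c, marg M u h c = marg M v h c := fun h hh c =>
    prefixMarg M u v h (fun a k hk => hagree a k (hk.trans hh)) c
  have hvj : ∀ a, v a j = u a j := fun a => (hagree a j le_rfl).symm
  have hlikeeq : likeSet u j = likeSet v j := by
    unfold likeSet
    apply Finset.filter_congr
    intro a _
    rw [hvj]
  rw [hprefix j le_rfl i]
  by_cases hpos : 0 < u i j
  swap
  · rw [marg_zero M hnw v (by rw [hvj]; exact hpos)]
    have hni : i ∉ likeSet u j := by simp [likeSet, hpos]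
    unfold likeProb
    rw [if_neg hni]
  -- main case
  have hi : i ∈ likeSet v j := by simp [likeSet, hvj, hpos]
  have hLne : (likeSet v j).Nonempty := ⟨i, hi⟩
  have hcpos : 0 < (likeSet v j).card := Finset.card_pos.mpr hLne
  -- KEY CLAIM
  have key : ∀ a ∈ likeSet v j, ((likeSet v j).card : ℝ)⁻¹ ≤ marg M v j a := by
    intro a ha
    have hva : 0 < v a j := (Finset.mem_filter.mp ha).2
    set p := marg M v j a with hp
    set K : ℝ := ∑ b ∈ (likeSet v j).erase a, ∑ h ∈ univ.erase j,
        (marg M v h a - marg M v h b) * v a h with hK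
    have main : ∀ T : ℝ, 0 < T → (1 - ((likeSet v j).card : ℝ) * p) * T ≤ K := by
      intro T hT
      set v' : Bids n m := setBid v a j T with hv'
      have hv'ne : ∀ (c : Fin n) (k : Fin m), ¬ (c = a ∧ k = j) → v' c k = v c k := by
        intro c k hck; rw [hv']; unfold setBid; rw [if_neg hck]
      have hv'aj : v' a j = T := by rw [hv']; unfold setBid; rw [if_pos ⟨rfl, rfl⟩]
      have hv'nn : ∀ c k, 0 ≤ v' c k := by
        intro c k; rw [hv']; unfold setBid; split
        · exact hT.le
        · exact hvnn c k
      have s1 : ∀ h : Fin m, h < j → ∀ c, marg M v' h c = marg M v h c := by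
        intro h hh c
        refine prefixMarg M v' v h (fun b k hk => ?_) c
        exact hv'ne b k (fun hbk => absurd (hbk.2 ▸ hk) (not_le.mpr hh))
      -- step: own marg at j invariant
      have s4 : marg M v' j a = p := by
        have hsed1 : setAgent v a (fun k => v' a k) = v' := by
          funext c k
          unfold setAgent
          by_cases hc : c = a
          · subst hc; rw [if_pos rfl]
          · rw [if_neg hc, (hv'ne c k (fun h => hc h.1)).symm]
        have sp1 := hsp n m v hvnn a (fun k => v' a k) (fun k => hv'nn a k)
        rw [hsed1] at sp1
        have hsed2 : setAgent v' a (fun k => v a k) = v := by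
          funext c k
          unfold setAgent
          by_cases hc : c = a
          · subst hc; simp
          · rw [if_neg hc, hv'ne c k (fun h => hc h.1)]
        have sp2 := hsp n m v' hv'nn a (fun k => v a k) (fun k => hvnn a k)
        rw [hsed2] at sp2
        -- isolate term j in sp1
        have hterm1 : ∀ h ∈ univ.erase j, marg M v' h a * v a h = marg M v h a * v a h := by
          intro h hh
          have hhj : h ≠ j := Finset.ne_of_mem_erase hh
          rcases lt_or_gt_of_ne hhj with hlt | hgt
          · rw [s1 h hlt]
          · rw [hvhigh a h (not_le.mpr hgt), mul_zero, mul_zero]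
        rw [← Finset.add_sum_erase _ _ (Finset.mem_univ j),
            ← Finset.add_sum_erase _ (fun h => marg M v h a * v a h) (Finset.mem_univ j),
            Finset.sum_congr rfl hterm1] at sp1
        have h1 : marg M v' j a ≤ marg M v j a :=
          le_of_mul_le_mul_right (by linarith) hva
        have hterm2 : ∀ h ∈ univ.erase j, marg M v h a * v' a h = marg M v' h a * v' a h := by
          intro h hh
          have hhj : h ≠ j := Finset.ne_of_mem_erase hh
          rcases lt_or_gt_of_ne hhj with hlt | hgt
          · rw [s1 h hlt]
          · rw [hv'ne a h (fun hc => hhj hc.2), hvhigh a h (not_le.mpr hgt), mul_zero, mul_zero]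
        rw [← Finset.add_sum_erase _ _ (Finset.mem_univ j),
            ← Finset.add_sum_erase _ (fun h => marg M v' h a * v' a h) (Finset.mem_univ j),
            Finset.sum_congr rfl hterm2, hv'aj] at sp2
        have h2 : marg M v j a ≤ marg M v' j a :=
          le_of_mul_le_mul_right (by linarith) hT
        exact le_antisymm h1 h2
      -- EFA applications
      have efa_b : ∀ b : Fin n, marg M v' j b * T
          ≤ p * T + ∑ h ∈ univ.erase j, (marg M v h a - marg M v h b) * v a h := by
        intro b
        have he := hefa n m v' hv'nn a b
        rw [← Finset.add_sum_erase _ (fun h => marg M v' h b * v' a h) (Finset.mem_univ j),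
            ← Finset.add_sum_erase _ (fun h => marg M v' h a * v' a h) (Finset.mem_univ j),
            hv'aj, s4] at he
        have hsum : ∑ h ∈ univ.erase j, marg M v' h a * v' a h
            - ∑ h ∈ univ.erase j, marg M v' h b * v' a h
            = ∑ h ∈ univ.erase j, (marg M v h a - marg M v h b) * v a h := by
          rw [← Finset.sum_sub_distrib]
          refine Finset.sum_congr rfl fun h hh => ?_
          have hhj : h ≠ j := Finset.ne_of_mem_erase hh
          rcases lt_or_gt_of_ne hhj with hlt | hgt
          · rw [s1 h hlt b, s1 h hlt a, hv'ne a h (fun hc => hhj hc.2), sub_mul]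
          · rw [hv'ne a h (fun hc => hhj hc.2), hvhigh a h (not_le.mpr hgt),
                mul_zero, mul_zero, mul_zero, sub_zero]
        linarith
      -- sum over b in L.erase a
      have s5 : ∑ c, marg M v' j c = 1 :=
        marg_sum_one M hnw v' (i0 := a) (by rw [hv'aj]; exact hT)
      have s6 : ∀ c ∈ univ, c ∉ likeSet v j → marg M v' j c = 0 := by
        intro c _ hc
        refine marg_zero M hnw v' ?_
        intro hcpos'
        by_cases hca : c = a
        · exact hc (hca ▸ ha)
        · rw [hv'ne c j (fun h => hca h.1)] at hcpos'
          exact hc (Finset.mem_filter.mpr ⟨Finset.mem_univ c, hcpos'⟩)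
      have hLsum : ∑ c ∈ likeSet v j, marg M v' j c = 1 := by
        rw [Finset.sum_subset (Finset.subset_univ _) s6]
        exact s5
      have hsumall : ∑ b ∈ (likeSet v j).erase a, marg M v' j b = 1 - p := by
        have h2 := Finset.add_sum_erase (likeSet v j) (fun c => marg M v' j c) ha
        rw [hLsum] at h2
        simp only [s4] at h2
        linarith
      have final := Finset.sum_le_sum (fun b (_hb : b ∈ (likeSet v j).erase a) => efa_b b)
      rw [← Finset.sum_mul, hsumall, Finset.sum_add_distrib, Finset.sum_const,
          nsmul_eq_mul, Finset.card_erase_of_mem ha, ← hK] at final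
      have hc1 : 1 ≤ (likeSet v j).card := hcpos
      rw [Nat.cast_sub hc1, Nat.cast_one] at final
      nlinarith [final]
    -- conclude from main
    have hcp : 1 - ((likeSet v j).card : ℝ) * p ≤ 0 := by
      by_contra hlt
      push_neg at hlt
      have hT : 0 < (|K| + 1) / (1 - ((likeSet v j).card : ℝ) * p) := by positivity
      have h3 := main _ hT
      rw [mul_div_cancel₀ _ (ne_of_gt hlt)] at h3
      have := le_abs_self K
      linarith
    have hcR : (0:ℝ) < ((likeSet v j).card : ℝ) := by exact_mod_cast hcpos
    rw [inv_le_iff_one_le_mul₀ hcR]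
    linarith
  -- finish: each marg ≥ 1/card and they sum to 1
  have hsum1 : ∑ c ∈ likeSet v j, marg M v j c = 1 := by
    rw [Finset.sum_subset (Finset.subset_univ _) (fun c _ hc =>
      marg_zero M hnw v (by simpa [likeSet] using hc))]
    exact marg_sum_one M hnw v (i0 := i) (by rw [hvj]; exact hpos)
  have hcR : ((likeSet v j).card : ℝ) ≠ 0 := by exact_mod_cast hcpos.ne'
  have hzero : ∑ c ∈ likeSet v j, (marg M v j c - ((likeSet v j).card : ℝ)⁻¹) = 0 := by
    rw [Finset.sum_sub_distrib, hsum1, Finset.sum_const, nsmul_eq_mul,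
        mul_inv_cancel₀ hcR, sub_self]
  have heach := (Finset.sum_eq_zero_iff_of_nonneg
      (fun c hc => sub_nonneg.mpr (key c hc))).mp hzero i hi
  have hie : marg M v j i = ((likeSet v j).card : ℝ)⁻¹ := by linarith [sub_eq_zero.mp heach]
  rw [hie]
  have hiu : i ∈ likeSet u j := hlikeeq ▸ hi
  unfold likeProb
  rw [if_pos hiu, hlikeeq]

/-- A non-wasteful mechanism is strategy-proof and envy-free ex
ante iff it is ex ante equivalent to the Like mechanism. -/
theorem stmt3 (M : OnlineMech) (hnw : NonWasteful M) :
    (StrategyProof M ∧ EFA M) ↔ ExAnteLike M := by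
  exact ⟨fun h => hard_dir M hnw h.1 h.2, fun h => easy_dir M h⟩
end
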